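/- The function (x,y) ↦ τ(x/y) with domain (0,∞)² is convex in x for each fixed y > 0, and concave in y for each fixed x > 0, where τ(z) = (√(1/z) − 1)/(√(1/z) + 1). -/

import Mathlib

/-- The rho-estimator link function `τ(z) = (√(1/z) − 1)/(√(1/z) + 1)`. -/
noncomputable def tauFn (z : ℝ) : ℝ :=
  (Real.sqrt (1 / z) - 1) / (Real.sqrt (1 / z) + 1)

lemma tauFn_eq {z : ℝ} (hz : 0 < z) : tauFn z = 2 / (1 + Real.sqrt z) - 1 := by
  have hw : 0 < Real.sqrt z := Real.sqrt_pos.mpr hz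
  have h1 : Real.sqrt (1 / z) = 1 / Real.sqrt z := by
    rw [one_div, Real.sqrt_inv, one_div]
  rw [tauFn, h1]
  have h2 : (0:ℝ) < 1 / Real.sqrt z + 1 := by positivity
  field_simp
  ring

lemma convexOn_two_div : ConvexOn ℝ (Set.Ioi (0:ℝ)) (fun t => 2 / (1 + t)) := by
  refine ⟨convex_Ioi 0, fun a ha b hb p q hp hq hpq => ?_⟩
  simp only [smul_eq_mul] at *
  have ha' : (0:ℝ) < 1 + a := by have := Set.mem_Ioi.mp ha; linarith
  have hb' : (0:ℝ) < 1 + b := by have := Set.mem_Ioi.mp hb; linarith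
  have haa := Set.mem_Ioi.mp ha
  have hbb := Set.mem_Ioi.mp hb
  have hab' : (0:ℝ) < 1 + (p * a + q * b) := by
    nlinarith [mul_nonneg hp haa.le, mul_nonneg hq hbb.le]
  rw [show p * (2 / (1 + a)) + q * (2 / (1 + b))
      = (p * 2 * (1 + b) + q * 2 * (1 + a)) / ((1 + a) * (1 + b)) by field_simp,
    div_le_div_iff₀ hab' (by positivity)]
  have hq' : q = 1 - p := by linarith
  subst hq'
  nlinarith [mul_nonneg (mul_nonneg hp hq) (sq_nonneg (a - b))]

lemma antitoneOn_two_div : AntitoneOn (fun t => 2 / (1 + t)) (Set.Ioi (0:ℝ)) := by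
  intro a ha b hb hab
  have ha' : (0:ℝ) < 1 + a := by have := Set.mem_Ioi.mp ha; linarith
  rw [div_le_div_iff₀ (by linarith) ha']
  nlinarith

lemma sqrt_div_image (c : ℝ) (hc : 0 < c) :
    (fun x => Real.sqrt (x / c)) '' Set.Ioi 0 = Set.Ioi (0:ℝ) := by
  ext t
  constructor
  · rintro ⟨x, hx, rfl⟩
    exact Set.mem_Ioi.mpr (Real.sqrt_pos.mpr (div_pos (Set.mem_Ioi.mp hx) hc))
  · intro ht
    have ht' := Set.mem_Ioi.mp ht
    refine ⟨c * t ^ 2, Set.mem_Ioi.mpr (by positivity), ?_⟩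
    show Real.sqrt (c * t ^ 2 / c) = t
    rw [mul_comm, mul_div_assoc, div_self (ne_of_gt hc), mul_one, Real.sqrt_sq ht'.le]

lemma concaveOn_sqrt_div (c : ℝ) (hc : 0 < c) :
    ConcaveOn ℝ (Set.Ioi 0) (fun x => Real.sqrt (x / c)) := by
  have h1 : ConcaveOn ℝ (Set.Ioi 0) Real.sqrt :=
    Real.strictConcaveOn_sqrt.concaveOn.subset Set.Ioi_subset_Ici_self (convex_Ioi 0)
  have h2 : ConcaveOn ℝ (Set.Ioi 0) (fun x => (Real.sqrt c)⁻¹ * Real.sqrt x) :=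
    h1.smul (by positivity)
  refine h2.congr fun x hx => ?_
  have hx' := Set.mem_Ioi.mp hx
  rw [Real.sqrt_div hx'.le, div_eq_inv_mul]

lemma convexOn_aux (c : ℝ) (hc : 0 < c) :
    ConvexOn ℝ (Set.Ioi 0) (fun x => 2 / (1 + Real.sqrt (x / c))) := by
  have himg := (sqrt_div_image c hc).symm
  exact (himg ▸ convexOn_two_div).comp_concaveOn (concaveOn_sqrt_div c hc)
    (himg ▸ antitoneOn_two_div)

/-- The function `(x, y) ↦ τ(x/y)` on `(0,∞)²` is convex in `x` for each fixed `y > 0` and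
concave in `y` for each fixed `x > 0`. -/
theorem tauFn_ratio_convex_concave :
    (∀ y : ℝ, 0 < y → ConvexOn ℝ (Set.Ioi (0 : ℝ)) (fun x => tauFn (x / y))) ∧
    (∀ x : ℝ, 0 < x → ConcaveOn ℝ (Set.Ioi (0 : ℝ)) (fun y => tauFn (x / y))) := by
  constructor
  · intro y hy
    have h := ((convexOn_aux y hy).sub (concaveOn_const 1 (convex_Ioi 0)))
    refine h.congr fun x hx => ?_
    have hx' := Set.mem_Ioi.mp hx
    exact (tauFn_eq (div_pos hx' hy)).symm
  · intro x hx
    -- τ(x/y) = 1 - 2/(1+√(y/x))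
    have h := ((concaveOn_const 1 (convex_Ioi 0)).sub (convexOn_aux x hx))
    refine h.congr fun y hy => ?_
    have hy' := Set.mem_Ioi.mp hy
    have hxy : 0 < x / y := div_pos hx hy'
    rw [tauFn_eq hxy]
    have hs : Real.sqrt (x / y) = 1 / Real.sqrt (y / x) := by
      rw [one_div, ← Real.sqrt_inv, inv_div]
    have hsy : 0 < Real.sqrt (y / x) := Real.sqrt_pos.mpr (div_pos hy' hx)
    rw [hs]
    simp only [Pi.sub_apply]
    field_simp
    ring
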